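/- Let K be a formally real field. The affine curve y² = x³ − 4 over K(t) has only constant rational points: if x, y ∈ K(t) satisfy y² = x³ − 4, then x, y ∈ K̄ ∩ K(t); in particular if x, y are in K(t) then y ∈ K (the constants). -/

import Mathlib

open Polynomial UniqueFactorizationMonoid UniqueFactorizationDomain

/-- Over the rational function field `K(t)` of a formally real field `K`,
the genus-one curve `y² = x³ - 4` has only constant points: any solution
`x, y ∈ K(t)` consists of constants, in particular `y ∈ K`. -/
theorem stmt10 (K : Type*) [Field K]
    (hfr : ∀ (n : ℕ) (f : Fin n → K), ∑ i, (f i) ^ 2 ≠ -1)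
    (x y : RatFunc K) (h : y ^ 2 = x ^ 3 - 4) :
    (∃ cx : K, x = RatFunc.C cx) ∧ ∃ cy : K, y = RatFunc.C cy := by
  classical
  haveI : CharZero K := by
    refine charZero_of_inj_zero fun n hn => ?_
    by_contra hn0
    obtain ⟨m, rfl⟩ := Nat.exists_eq_succ_of_ne_zero hn0
    refine hfr m (fun _ => 1) ?_
    have hm : ((m : K) + 1) = 0 := by exact_mod_cast hn
    simp only [one_pow, Finset.sum_const, Finset.card_univ, Fintype.card_fin, nsmul_eq_mul,
      mul_one]
    linear_combination hm
  have hsq : ∀ a b : K, a ^ 2 + b ^ 2 = 0 → a = 0 := by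
    intro a b hab
    by_cases hb : b = 0
    · have h2 : a ^ 2 = 0 := by rw [hb] at hab; simpa using hab
      exact pow_eq_zero_iff (n := 2) (by norm_num) |>.mp h2
    · exfalso
      refine hfr 1 (fun _ => a / b) ?_
      have h2 : (a / b) ^ 2 = -1 := by
        field_simp
        linear_combination hab
      simpa using h2
  set p := x.num with hp
  set q := x.denom with hq
  set r := y.num with hr
  set s := y.denom with hs
  have hq0 : q ≠ 0 := x.denom_ne_zero
  have hs0 : s ≠ 0 := y.denom_ne_zero
  have hqm : q.Monic := x.monic_denom
  have hsm : s.Monic := y.monic_denom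
  have hpq : IsCoprime p q := x.isCoprime_num_denom
  have hrs : IsCoprime r s := y.isCoprime_num_denom
  have haq : (algebraMap K[X] (RatFunc K)) q ≠ 0 := RatFunc.algebraMap_ne_zero hq0
  have has : (algebraMap K[X] (RatFunc K)) s ≠ 0 := RatFunc.algebraMap_ne_zero hs0
  -- clear denominators
  have key : r ^ 2 * q ^ 3 = (p ^ 3 - 4 * q ^ 3) * s ^ 2 := by
    apply RatFunc.algebraMap_injective K
    have hxe : (algebraMap K[X] (RatFunc K)) p / (algebraMap K[X] (RatFunc K)) q = x :=
      RatFunc.num_div_denom x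
    have hye : (algebraMap K[X] (RatFunc K)) r / (algebraMap K[X] (RatFunc K)) s = y :=
      RatFunc.num_div_denom y
    have h2 : ((algebraMap K[X] (RatFunc K)) r / (algebraMap K[X] (RatFunc K)) s) ^ 2 =
        ((algebraMap K[X] (RatFunc K)) p / (algebraMap K[X] (RatFunc K)) q) ^ 3 - 4 := by
      rw [hxe, hye]; exact h
    field_simp at h2
    push_cast [map_mul, map_pow, map_sub, map_ofNat]
    linear_combination h2
  -- q^3 = s^2
  have hApq : IsCoprime (p ^ 3 - 4 * q ^ 3) q := by
    have h1 : IsCoprime (p ^ 3) q := (hpq.pow (m := 3) (n := 1)).of_isCoprime_of_dvd_right (by simp)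
    have h2 := h1.add_mul_left_left (-(4 * q ^ 2))
    rwa [show p ^ 3 + q * -(4 * q ^ 2) = p ^ 3 - 4 * q ^ 3 by ring] at h2
  have hq3s2 : q ^ 3 = s ^ 2 := by
    have h1 : q ^ 3 ∣ s ^ 2 := by
      have hd : (q ^ 3 : K[X]) ∣ (p ^ 3 - 4 * q ^ 3) * s ^ 2 := ⟨r ^ 2, by linear_combination -key⟩
      exact ((IsCoprime.pow (m := 3) (n := 1) hApq.symm).of_isCoprime_of_dvd_right
        (by simp)).dvd_of_dvd_mul_left hd
    have h2 : s ^ 2 ∣ q ^ 3 := by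
      have hd : (s ^ 2 : K[X]) ∣ r ^ 2 * q ^ 3 := ⟨p ^ 3 - 4 * q ^ 3, by linear_combination key⟩
      exact (hrs.symm.pow (m := 2) (n := 2)).dvd_of_dvd_mul_left hd
    exact eq_of_monic_of_associated (hqm.pow _) (hsm.pow _) (associated_of_dvd_dvd h1 h2)
  have hr2 : r ^ 2 = p ^ 3 - 4 * q ^ 3 := by
    have h2 := key
    rw [← hq3s2] at h2
    exact mul_right_cancel₀ (pow_ne_zero 3 hq0) h2
  -- extract c with q = c^2, s = c^3
  obtain ⟨c, hc2, hc3⟩ : ∃ c : K[X], q = c ^ 2 ∧ s = c ^ 3 := by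
    have hqs : q ∣ s := by
      set g := gcd q s with hg
      have hg0 : g ≠ 0 := gcd_ne_zero_of_left hq0
      have hq1 : g * (q / g) = q := EuclideanDomain.mul_div_cancel' hg0 (gcd_dvd_left q s)
      have hs1 : g * (s / g) = s := EuclideanDomain.mul_div_cancel' hg0 (gcd_dvd_right q s)
      have hcop : IsCoprime (q / g) (s / g) := isCoprime_div_gcd_div_gcd hs0
      have hkey : g * (q / g) ^ 3 = (s / g) ^ 2 := by
        have h3 : g ^ 2 * (g * (q / g) ^ 3) = g ^ 2 * (s / g) ^ 2 := by
          calc g ^ 2 * (g * (q / g) ^ 3) = (g * (q / g)) ^ 3 := by ring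
          _ = s ^ 2 := by rw [hq1, hq3s2]
          _ = (g * (s / g)) ^ 2 := by rw [hs1]
          _ = g ^ 2 * (s / g) ^ 2 := by ring
        exact mul_left_cancel₀ (pow_ne_zero 2 hg0) h3
      have hu : IsUnit (q / g) := by
        refine (hcop.pow_right (n := 2)).isUnit_of_dvd ⟨g * (q / g) ^ 2, ?_⟩
        linear_combination -hkey
      obtain ⟨u, hu⟩ := hu
      have hassoc : Associated g q := ⟨u, by rw [hu]; exact hq1⟩
      exact hassoc.symm.dvd.trans (gcd_dvd_right q s)
    obtain ⟨c, hc⟩ := hqs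
    have hc2 : q = c ^ 2 := by
      have h3 : q ^ 2 * q = q ^ 2 * c ^ 2 := by
        have h4 := hq3s2
        rw [hc] at h4
        linear_combination h4
      exact mul_left_cancel₀ (pow_ne_zero 2 hq0) h3
    exact ⟨c, hc2, by rw [hc, hc2]; ring⟩
  have hc0 : c ≠ 0 := fun h0 => hq0 (by rw [hc2, h0]; ring)
  -- main equation with c
  have hmain : r ^ 2 = p ^ 3 - 4 * c ^ 6 := by rw [hr2, hc2]; ring
  have h4u : IsUnit (4 : K[X]) := by
    rw [show (4 : K[X]) = C 4 from (map_ofNat C 4).symm]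
    exact isUnit_C.mpr (isUnit_iff_ne_zero.mpr (by norm_num))
  by_cases hy0 : y = 0
  · -- then x^3 = 4, so x is a constant
    have hr0 : r = 0 := by rw [hr, hy0, RatFunc.num_zero]
    have hp3 : p ^ 3 = 4 * q ^ 3 := by
      have := hr2; rw [hr0] at this; linear_combination -this
    have hqu : IsUnit q := (hpq.symm.pow_right (n := 3)).isUnit_of_dvd
      ⟨4 * q ^ 2, by linear_combination hp3⟩
    have hq1 : q = 1 := hqm.eq_one_of_isUnit hqu
    have hp3' : p ^ 3 = 4 := by rw [hp3, hq1]; ring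
    have hp0 : p ≠ 0 := by
      intro h0; rw [h0] at hp3'
      have h5 : (0 : K[X]) = 4 := by simpa only [zero_pow, ne_eq, OfNat.ofNat_ne_zero, not_false_eq_true] using hp3'
      exact h4u.ne_zero h5.symm
    have hdp : p.natDegree = 0 := by
      have hd := congrArg natDegree hp3'
      rw [natDegree_pow] at hd
      simp only [natDegree_ofNat] at hd
      omega
    obtain ⟨a, ha⟩ := natDegree_eq_zero.mp hdp
    refine ⟨⟨a, ?_⟩, ⟨0, by rw [hy0, map_zero]⟩⟩
    rw [← RatFunc.num_div_denom x, ← hp, ← hq, hq1, map_one, div_one, ← ha,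
      RatFunc.algebraMap_C]
  · have hr0 : r ≠ 0 := by rw [hr]; exact RatFunc.num_ne_zero hy0
    have hp0 : p ≠ 0 := by
      intro h0
      have h4 : r ^ 2 = -((4 : K[X]) * c ^ 6) := by rw [hmain, h0]; ring
      have hlc := congrArg leadingCoeff h4
      rw [leadingCoeff_pow, leadingCoeff_neg,
        show (4 : K[X]) = C 4 from (map_ofNat C 4).symm, leadingCoeff_mul, leadingCoeff_C,
        leadingCoeff_pow] at hlc
      have := hsq r.leadingCoeff (2 * c.leadingCoeff ^ 3) (by linear_combination hlc)
      exact hr0 (leadingCoeff_eq_zero.mp this)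
    -- coprimality for Mason-Stothers
    have hrc : IsCoprime r c :=
      hrs.of_isCoprime_of_dvd_right ⟨c ^ 2, by rw [hc3]; ring⟩
    have hpc : IsCoprime p c :=
      hpq.of_isCoprime_of_dvd_right ⟨c, by rw [hc2]; ring⟩
    have hpr2 : IsCoprime p (r ^ 2) := by
      have h1 : IsCoprime p (-((4 : K[X]) * c ^ 6)) :=
        ((isCoprime_mul_unit_left_right h4u p (c ^ 6)).mpr (hpc.pow_right (n := 6))).neg_right
      have h2 := h1.add_mul_left_right (p ^ 2)
      rwa [show -((4 : K[X]) * c ^ 6) + p * p ^ 2 = r ^ 2 by linear_combination -hmain] at h2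
    have hab : IsCoprime (r ^ 2) (4 * c ^ 6) :=
      (isCoprime_mul_unit_left_right h4u _ _).mpr (hrc.pow (m := 2) (n := 6))
    have hbc : IsCoprime (4 * c ^ 6) (-(p ^ 3)) :=
      ((isCoprime_mul_unit_left_left h4u _ _).mpr (hpc.symm.pow (m := 6) (n := 3))).neg_right
    have hca : IsCoprime (-(p ^ 3)) (r ^ 2) := (hpr2.pow_left (m := 3)).neg_left
    have h40 : (4 : K[X]) ≠ 0 := h4u.ne_zero
    rcases Polynomial.abc (pow_ne_zero 2 hr0) (mul_ne_zero h40 (pow_ne_zero 6 hc0))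
        (neg_ne_zero.mpr (pow_ne_zero 3 hp0)) hab
        (by linear_combination hmain) with ⟨h1, h2, h3⟩ | ⟨hda, hdb, hdc⟩
    · -- degree contradiction
      exfalso
      set R := (radical (r ^ 2 * (4 * c ^ 6) * -(p ^ 3))).natDegree with hR
      have hrad : radical (r ^ 2 * (4 * c ^ 6) * -(p ^ 3)) = radical r * radical c * radical p := by
        obtain ⟨u4, hu4⟩ := h4u
        rw [radical_mul (IsCoprime.mul_left hca.symm hbc).isRelPrime, radical_mul hab.isRelPrime,
          radical_pow r (by norm_num), ← hu4, radical_mul_of_isUnit_left u4.isUnit,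
          radical_pow c (by norm_num), radical_neg, radical_pow p (by norm_num)]
      have hRle : R ≤ r.natDegree + c.natDegree + p.natDegree := by
        rw [hR, hrad, natDegree_mul (mul_ne_zero (radical_ne_zero (a := r)) (radical_ne_zero (a := c)))
          (radical_ne_zero (a := p)), natDegree_mul (radical_ne_zero (a := r)) (radical_ne_zero (a := c))]
        gcongr
        · exact natDegree_le_of_dvd (radical_dvd_self (a := r)) hr0
        · exact natDegree_le_of_dvd (radical_dvd_self (a := c)) hc0
        · exact natDegree_le_of_dvd (radical_dvd_self (a := p)) hp0
      rw [natDegree_pow] at h1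
      rw [natDegree_mul h40 (pow_ne_zero 6 hc0), natDegree_ofNat, natDegree_pow] at h2
      rw [natDegree_neg, natDegree_pow] at h3
      omega
    · -- all derivatives vanish: everything is constant
      have hdr : r.natDegree = 0 := by
        have := natDegree_eq_zero_of_derivative_eq_zero hda
        rw [natDegree_pow] at this; omega
      have hdc' : c.natDegree = 0 := by
        have := natDegree_eq_zero_of_derivative_eq_zero hdb
        rw [natDegree_mul h40 (pow_ne_zero 6 hc0), natDegree_ofNat, natDegree_pow] at this
        omega
      have hdp : p.natDegree = 0 := by
        have := natDegree_eq_zero_of_derivative_eq_zero hdc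
        rw [natDegree_neg, natDegree_pow] at this; omega
      have hq1 : q = 1 := by
        refine hqm.natDegree_eq_zero.mp ?_
        rw [hc2, natDegree_pow, hdc']
      have hs1 : s = 1 := by
        refine hsm.natDegree_eq_zero.mp ?_
        rw [hc3, natDegree_pow, hdc']
      obtain ⟨a, ha⟩ := natDegree_eq_zero.mp hdp
      obtain ⟨b, hb⟩ := natDegree_eq_zero.mp hdr
      constructor
      · exact ⟨a, by rw [← RatFunc.num_div_denom x, ← hp, ← hq, hq1, map_one, div_one, ← ha,
          RatFunc.algebraMap_C]⟩
      · exact ⟨b, by rw [← RatFunc.num_div_denom y, ← hr, ← hs, hs1, map_one, div_one, ← hb,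
          RatFunc.algebraMap_C]⟩
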